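/- Lemma 3.1, second (weighted) estimate: let α ∈ (0,1), let 0 = t_0 < ⋯ < t_N = T be a partition, let H be a real Hilbert space, and let B_0, …, B_N be bounded self-adjoint linear operators on H for which there are constants 0 < β_0 ≤ γ_0 with β_0‖x‖² ≤ ⟨B_j x, x⟩ ≤ γ_0‖x‖² for all x ∈ H and 0 ≤ j ≤ N. Then for every sequence φ^0, …, φ^N in H and every 1 ≤ n ≤ N, (1/2) Σ_{j=1}^{n} K^{n,j}_{1−α}( ⟨B_jφ^j,φ^j⟩ − ⟨B_{j−1}φ^{j−1},φ^{j−1}⟩ ) ≤ ⟨ Σ_{j=1}^{n} K^{n,j}_{1−α}(B_jφ^j − B_{j−1}φ^{j−1}), φ^n ⟩ − (1/2) Σ_{j=0}^{n−1} K^{n,j+1}_{1−α}( ⟨B_{j+1}φ^n,φ^n⟩ − ⟨B_jφ^n,φ^n⟩ ). -/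

import Mathlib

open Finset

/-- The kernel `k_β(s) = s^(β-1)/Γ(β)`. -/
noncomputable def kker (β s : ℝ) : ℝ := s ^ (β - 1) / Real.Gamma β

/-- The discrete L1 kernels `K^{n,j}_{1-α}`. -/
noncomputable def Kd (α : ℝ) (t : ℕ → ℝ) (n j : ℕ) : ℝ :=
  (kker (2 - α) (t n - t (j - 1)) - kker (2 - α) (t n - t j)) / (t j - t (j - 1))

/-- The complementary discrete kernels `P^{n,i}_α`, defined by downward recursion. -/
noncomputable def Pd (α : ℝ) (t : ℕ → ℝ) (n i : ℕ) : ℝ :=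
  if i = n then 1 / Kd α t n n
  else (1 / Kd α t i i) *
    ∑ j ∈ (Finset.Ioc i n).attach,
      Pd α t n j.1 * (Kd α t j.1 (i + 1) - Kd α t j.1 i)
termination_by n - i
decreasing_by
  have h := Finset.mem_Ioc.mp j.2
  omega

/-- Abel-summation type estimate: if `K` is nonnegative and nondecreasing and `e` is
nonnegative, then `∑_{j=1}^n K j (e j - e (j-1)) ≤ K n * e n`. -/
lemma abel_aux (K e : ℕ → ℝ) (n : ℕ) (hn : 1 ≤ n)
    (hK : ∀ j, 1 ≤ j → j ≤ n → 0 ≤ K j)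
    (he : ∀ j, j ≤ n → 0 ≤ e j)
    (hmono : ∀ j, 1 ≤ j → j < n → K j ≤ K (j + 1)) :
    ∑ j ∈ Finset.Icc 1 n, K j * (e j - e (j - 1)) ≤ K n * e n := by
  induction n, hn using Nat.le_induction with
  | base =>
    simp only [Finset.Icc_self, Finset.sum_singleton]
    have h1 := hK 1 le_rfl le_rfl
    have h2 := he 0 (by omega)
    nlinarith
  | succ m hm ih =>
    rw [← Finset.Ico_add_one_right_eq_Icc, Finset.sum_Ico_succ_top (by omega), Finset.Ico_add_one_right_eq_Icc]
    have ihh := ih (fun j h1 h2 => hK j h1 (by omega)) (fun j h => he j (by omega))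
      (fun j h1 h2 => hmono j h1 (by omega))
    have h1 := hmono m (by omega) (by omega)
    have h2 := he m (by omega)
    simp only [Nat.add_sub_cancel]
    nlinarith

theorem discrete_caputo_weighted_estimate
    {H : Type*} [NormedAddCommGroup H] [InnerProductSpace ℝ H] [CompleteSpace H]
    (α T : ℝ) (N : ℕ) (t : ℕ → ℝ)
    (hα0 : 0 < α) (hα1 : α < 1) (hT : 0 < T)
    (ht0 : t 0 = 0) (htN : t N = T)
    (hmono : ∀ j, j < N → t j < t (j + 1))
    (B : ℕ → H →L[ℝ] H) (β₀ γ₀ : ℝ)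
    (hβ₀ : 0 < β₀) (hβγ : β₀ ≤ γ₀)
    (hBsym : ∀ j, j ≤ N → ∀ x y : H, (inner ℝ (B j x) y : ℝ) = inner ℝ x (B j y))
    (hBlow : ∀ j, j ≤ N → ∀ x : H, β₀ * ‖x‖ ^ 2 ≤ (inner ℝ (B j x) x : ℝ))
    (hBup : ∀ j, j ≤ N → ∀ x : H, (inner ℝ (B j x) x : ℝ) ≤ γ₀ * ‖x‖ ^ 2)
    (φ : ℕ → H) :
    ∀ n, 1 ≤ n → n ≤ N →
      (1 / 2) * ∑ j ∈ Finset.Icc 1 n,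
          Kd α t n j * ((inner ℝ (B j (φ j)) (φ j) : ℝ)
            - (inner ℝ (B (j - 1) (φ (j - 1))) (φ (j - 1)) : ℝ))
        ≤ (inner ℝ (∑ j ∈ Finset.Icc 1 n,
              Kd α t n j • (B j (φ j) - B (j - 1) (φ (j - 1)))) (φ n) : ℝ)
          - (1 / 2) * ∑ j ∈ Finset.range n,
              Kd α t n (j + 1) * ((inner ℝ (B (j + 1) (φ n)) (φ n) : ℝ)
                - (inner ℝ (B j (φ n)) (φ n) : ℝ)) := by
  intro n hn1 hnN
  have h2α : (0:ℝ) < 2 - α := by linarith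
  have hΓ : 0 < Real.Gamma (2 - α) := Real.Gamma_pos_of_pos h2α
  have hexp : (2:ℝ) - α - 1 = 1 - α := by ring
  -- strict monotonicity of the partition
  have hlt : ∀ j : ℕ, j ≤ N → ∀ i : ℕ, i < j → t i < t j := by
    intro j
    induction j with
    | zero => intro _ i h; omega
    | succ m ih =>
      intro hm i hi
      rcases Nat.lt_succ_iff_lt_or_eq.mp hi with h | h
      · exact (ih (by omega) i h).trans (hmono m (by omega))
      · subst h; exact hmono i (by omega)
  have hle : ∀ i j : ℕ, i ≤ j → j ≤ N → t i ≤ t j := by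
    intro i j hij hjN
    rcases eq_or_lt_of_le hij with rfl | h
    · exact le_rfl
    · exact (hlt j hjN i h).le
  -- concavity of the kernel
  have hconc : ConcaveOn ℝ (Set.Ici 0) (kker (2 - α)) := by
    have h1 : ConcaveOn ℝ (Set.Ici 0) (fun x : ℝ => x ^ ((1:ℝ) - α)) :=
      (Real.strictConcaveOn_rpow (by linarith) (by linarith)).concaveOn
    have h2 := h1.smul (c := (Real.Gamma (2 - α))⁻¹) (by positivity)
    have h3 : kker (2 - α) = fun x : ℝ => (Real.Gamma (2 - α))⁻¹ • x ^ ((1:ℝ) - α) := by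
      funext s
      simp only [kker, Pi.smul_apply, smul_eq_mul, hexp]
      ring
    rw [h3]; exact h2
  -- nonnegativity of the discrete kernels
  have hKnn : ∀ j, 1 ≤ j → j ≤ n → 0 ≤ Kd α t n j := by
    intro j h1 h2
    have hjN : j ≤ N := le_trans h2 hnN
    have hden : 0 < t j - t (j - 1) := by
      have := hlt j hjN (j - 1) (by omega); linarith
    have ha : 0 ≤ t n - t j := by
      have := hle j n h2 hnN; linarith
    have hb : t n - t j ≤ t n - t (j - 1) := by
      have := hle (j - 1) j (by omega) hjN; linarith
    have hnum : kker (2 - α) (t n - t j) ≤ kker (2 - α) (t n - t (j - 1)) := by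
      unfold kker
      have hr := Real.rpow_le_rpow ha hb (by linarith : (0:ℝ) ≤ 2 - α - 1)
      exact div_le_div_of_nonneg_right hr hΓ.le
    exact div_nonneg (by linarith) hden.le
  -- monotonicity of the discrete kernels
  have hKmono : ∀ j, 1 ≤ j → j < n → Kd α t n j ≤ Kd α t n (j + 1) := by
    intro j h1 h2
    have hj1N : j + 1 ≤ N := by omega
    have hx : t n - t (j + 1) ∈ Set.Ici (0:ℝ) := by
      simp only [Set.mem_Ici]
      have := hle (j + 1) n (by omega) hnN; linarith
    have hz : t n - t (j - 1) ∈ Set.Ici (0:ℝ) := by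
      simp only [Set.mem_Ici]
      have := hle (j - 1) n (by omega) hnN; linarith
    have hxy : t n - t (j + 1) < t n - t j := by
      have := hlt (j + 1) hj1N j (by omega); linarith
    have hyz : t n - t j < t n - t (j - 1) := by
      have := hlt j (by omega) (j - 1) (by omega); linarith
    have key := hconc.slope_anti_adjacent hx hz hxy hyz
    have e1 : t n - t (j - 1) - (t n - t j) = t j - t (j - 1) := by ring
    have e2 : t n - t j - (t n - t (j + 1)) = t (j + 1) - t j := by ring
    rw [e1, e2] at key
    simp only [Kd, Nat.add_sub_cancel]
    exact key
  -- symmetry-based expansion of the weighted "energy"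
  have he_eq : ∀ j, j ≤ N →
      (inner ℝ (B j (φ j - φ n)) (φ j - φ n) : ℝ)
        = (inner ℝ (B j (φ j)) (φ j) : ℝ) - 2 * (inner ℝ (B j (φ j)) (φ n) : ℝ)
          + (inner ℝ (B j (φ n)) (φ n) : ℝ) := by
    intro j hj
    have hsym : (inner ℝ (B j (φ n)) (φ j) : ℝ) = (inner ℝ (B j (φ j)) (φ n) : ℝ) := by
      rw [hBsym j hj (φ n) (φ j), real_inner_comm]
    simp only [map_sub, inner_sub_left, inner_sub_right]
    linarith [hsym]
  have hEnn : ∀ j, j ≤ N → 0 ≤ (inner ℝ (B j (φ j - φ n)) (φ j - φ n) : ℝ) := fun j hj =>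
    le_trans (mul_nonneg hβ₀.le (sq_nonneg _)) (hBlow j hj _)
  -- rewrite the inner product of the sum
  have hsum1 : (inner ℝ (∑ j ∈ Finset.Icc 1 n,
        Kd α t n j • (B j (φ j) - B (j - 1) (φ (j - 1)))) (φ n) : ℝ)
      = ∑ j ∈ Finset.Icc 1 n, Kd α t n j *
          ((inner ℝ (B j (φ j)) (φ n) : ℝ) - (inner ℝ (B (j - 1) (φ (j - 1))) (φ n) : ℝ)) := by
    rw [sum_inner]
    exact Finset.sum_congr rfl fun j _ => by
      rw [real_inner_smul_left, inner_sub_left]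
  -- reindex the range sum
  have hsum2 : ∑ j ∈ Finset.range n, Kd α t n (j + 1) *
        ((inner ℝ (B (j + 1) (φ n)) (φ n) : ℝ) - (inner ℝ (B j (φ n)) (φ n) : ℝ))
      = ∑ j ∈ Finset.Icc 1 n, Kd α t n j *
        ((inner ℝ (B j (φ n)) (φ n) : ℝ) - (inner ℝ (B (j - 1) (φ n)) (φ n) : ℝ)) := by
    rw [← Finset.Ico_add_one_right_eq_Icc, Finset.sum_Ico_eq_sum_range]
    simp only [Nat.succ_sub_one, Nat.add_sub_cancel]
    refine Finset.sum_congr rfl fun j _ => ?_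
    rw [Nat.add_comm 1 j]
    simp
  -- the Abel-summation estimate
  have key : ∑ j ∈ Finset.Icc 1 n, Kd α t n j *
      ((inner ℝ (B j (φ j - φ n)) (φ j - φ n) : ℝ)
        - (inner ℝ (B (j - 1) (φ (j - 1) - φ n)) (φ (j - 1) - φ n) : ℝ)) ≤ 0 := by
    have h : ∑ j ∈ Finset.Icc 1 n, Kd α t n j *
        ((inner ℝ (B j (φ j - φ n)) (φ j - φ n) : ℝ)
          - (inner ℝ (B (j - 1) (φ (j - 1) - φ n)) (φ (j - 1) - φ n) : ℝ))
        ≤ Kd α t n n * (inner ℝ (B n (φ n - φ n)) (φ n - φ n) : ℝ) :=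
      abel_aux (fun j => Kd α t n j)
        (fun j => (inner ℝ (B j (φ j - φ n)) (φ j - φ n) : ℝ)) n hn1
        (fun j h1 h2 => hKnn j h1 h2)
        (fun j hj => hEnn j (le_trans hj hnN))
        (fun j h1 h2 => hKmono j h1 h2)
    have hz : (inner ℝ (B n (φ n - φ n)) (φ n - φ n) : ℝ) = 0 := by
      simp
    rw [hz, mul_zero] at h
    exact h
  -- combine everything
  have hcomb : ∑ j ∈ Finset.Icc 1 n, Kd α t n j *
        ((inner ℝ (B j (φ j)) (φ n) : ℝ) - (inner ℝ (B (j - 1) (φ (j - 1))) (φ n) : ℝ))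
      - (1 / 2) * ∑ j ∈ Finset.Icc 1 n, Kd α t n j *
        ((inner ℝ (B j (φ n)) (φ n) : ℝ) - (inner ℝ (B (j - 1) (φ n)) (φ n) : ℝ))
      - (1 / 2) * ∑ j ∈ Finset.Icc 1 n, Kd α t n j *
        ((inner ℝ (B j (φ j)) (φ j) : ℝ) - (inner ℝ (B (j - 1) (φ (j - 1))) (φ (j - 1)) : ℝ))
      = (-(1 / 2)) * ∑ j ∈ Finset.Icc 1 n, Kd α t n j *
        ((inner ℝ (B j (φ j - φ n)) (φ j - φ n) : ℝ)
          - (inner ℝ (B (j - 1) (φ (j - 1) - φ n)) (φ (j - 1) - φ n) : ℝ)) := by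
    rw [Finset.mul_sum, Finset.mul_sum, Finset.mul_sum, ← Finset.sum_sub_distrib,
      ← Finset.sum_sub_distrib]
    refine Finset.sum_congr rfl fun j hj => ?_
    obtain ⟨hj1, hj2⟩ := Finset.mem_Icc.mp hj
    have e1 := he_eq j (by omega)
    have e2 := he_eq (j - 1) (by omega)
    linear_combination ((1 / 2) * Kd α t n j) * e1 - ((1 / 2) * Kd α t n j) * e2
  rw [hsum1, hsum2, ← sub_nonneg, hcomb]
  linarith [key]
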